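/- Let N be a natural number and p, λ, β, ω real numbers with 1 < p < N, λ > 0, β > 0, ω > 0. Let φ, g : ℝ → ℝ with φ continuously differentiable on [1,∞), φ(r) > 0 for all r ≥ 1, g continuous on [1,∞) with g(r) > 0 for all r ≥ 1, F satisfying the radial eigenvalue ODE on (1,∞), the Robin condition φ'(1) = β^(1/(p−1))·φ(1), and r_* > 1 with φ'(r_*) = 0. Assume moreover that r ↦ r^(N−1)·g(r)·φ(r)^p is Lebesgue integrable on (1,∞) and satisfies the normalization ω·∫_1^∞ r^(N−1)·g(r)·φ(r)^p dr = 1. Then β·ω·φ(1)^p < λ. -/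

import Mathlib

open Real Set MeasureTheory

/-- The radial quantity `F(r) = r^(N-1) |φ'(r)|^(p-2) φ'(r)`, written with
real exponents via the sign function. -/
noncomputable def radialF (N : ℕ) (p : ℝ) (φ : ℝ → ℝ) (r : ℝ) : ℝ :=
  r ^ ((N : ℝ) - 1) * Real.sign (deriv φ r) * |deriv φ r| ^ (p - 1)

lemma sign_mul_abs_rpow_continuous {q : ℝ} (hq : 0 < q) :
    Continuous fun x : ℝ => Real.sign x * |x| ^ q := by
  rw [continuous_iff_continuousAt]
  intro x
  rcases lt_trichotomy x 0 with hx | hx | hx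
  · have h1 : ContinuousAt (fun y : ℝ => (-1 : ℝ) * |y| ^ q) x := by
      refine ContinuousAt.mul continuousAt_const ?_
      exact (Real.continuousAt_rpow_const _ _ (Or.inr hq.le)).comp continuous_abs.continuousAt
    refine h1.congr ?_
    filter_upwards [eventually_lt_nhds hx] with y hy
    rw [Real.sign_of_neg hy]
  · subst hx
    have h0 : Real.sign (0 : ℝ) * |(0 : ℝ)| ^ q = 0 := by
      simp [Real.sign_zero]
    rw [ContinuousAt, h0]
    have hg : Filter.Tendsto (fun y : ℝ => |y| ^ q) (nhds 0) (nhds 0) := by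
      have : ContinuousAt (fun y : ℝ => |y| ^ q) 0 :=
        (Real.continuousAt_rpow_const _ _ (Or.inr hq.le)).comp continuous_abs.continuousAt
      simpa [Real.zero_rpow hq.ne'] using this.tendsto
    refine squeeze_zero_norm (fun y => ?_) hg
    have h1 : |Real.sign y| ≤ 1 := by
      rcases lt_trichotomy y 0 with h | h | h <;>
        simp [Real.sign_of_neg, Real.sign_of_pos, Real.sign_zero, h]
    have h2 : (0 : ℝ) ≤ |y| ^ q := Real.rpow_nonneg (abs_nonneg _) _
    calc ‖Real.sign y * |y| ^ q‖ = |Real.sign y| * |(|y| ^ q)| := abs_mul _ _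
      _ ≤ 1 * |y| ^ q := by
          rw [abs_of_nonneg h2]; exact mul_le_mul_of_nonneg_right h1 h2
      _ = |y| ^ q := one_mul _
  · have h1 : ContinuousAt (fun y : ℝ => (1 : ℝ) * |y| ^ q) x := by
      refine ContinuousAt.mul continuousAt_const ?_
      exact (Real.continuousAt_rpow_const _ _ (Or.inr hq.le)).comp continuous_abs.continuousAt
    refine h1.congr ?_
    filter_upwards [eventually_gt_nhds hx] with y hy
    rw [Real.sign_of_pos hy]

/-- Upper bound on the boundary value `φ(1)` in Theorem 1.4(a):
`β ω φ(1)^p < λ` under the normalization `ω ∫_1^∞ r^(N-1) g φ^p = 1`. -/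
theorem boundary_value_upper (N : ℕ) (p lam β ω : ℝ)
    (hp : 1 < p) (hpN : p < N) (hlam : 0 < lam) (hβ : 0 < β) (hω : 0 < ω)
    (φ g : ℝ → ℝ)
    (hφdiff : ∀ r ≥ (1 : ℝ), DifferentiableAt ℝ φ r)
    (hφC1 : ContinuousOn (deriv φ) (Set.Ici 1))
    (hφpos : ∀ r ≥ (1 : ℝ), 0 < φ r)
    (hgcont : ContinuousOn g (Set.Ici 1))
    (hgpos : ∀ r ≥ (1 : ℝ), 0 < g r)
    (hODE : ∀ r > (1 : ℝ),
      HasDerivAt (radialF N p φ) (-(lam * r ^ ((N : ℝ) - 1) * g r * φ r ^ (p - 1))) r)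
    (hRobin : deriv φ 1 = β ^ (1 / (p - 1)) * φ 1)
    (rstar : ℝ) (hrstar : 1 < rstar) (hcrit : deriv φ rstar = 0)
    (hInt : IntegrableOn (fun r : ℝ => r ^ ((N : ℝ) - 1) * g r * φ r ^ p) (Set.Ioi 1))
    (hNorm : ω * ∫ r in Set.Ioi (1 : ℝ), r ^ ((N : ℝ) - 1) * g r * φ r ^ p = 1) :
    β * ω * φ 1 ^ p < lam := by
  have hq : 0 < p - 1 := by linarith
  have hle : (1 : ℝ) ≤ rstar := hrstar.le
  -- continuity of φ on Ici 1
  have hφcont : ContinuousOn φ (Ici 1) := fun r hr =>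
    (hφdiff r hr).continuousAt.continuousWithinAt
  -- positivity of r^(N-1) for r ≥ 1
  have hrpow_pos : ∀ r : ℝ, 1 ≤ r → 0 < r ^ ((N : ℝ) - 1) := fun r hr =>
    Real.rpow_pos_of_pos (lt_of_lt_of_le one_pos hr) _
  -- value of F at 1
  have hd1pos : 0 < deriv φ 1 := by
    rw [hRobin]
    exact mul_pos (Real.rpow_pos_of_pos hβ _) (hφpos 1 le_rfl)
  have hF1 : radialF N p φ 1 = β * φ 1 ^ (p - 1) := by
    unfold radialF
    rw [Real.sign_of_pos hd1pos, abs_of_pos hd1pos, hRobin, Real.one_rpow,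
      Real.mul_rpow (Real.rpow_nonneg hβ.le _) (hφpos 1 le_rfl).le,
      ← Real.rpow_mul hβ.le, one_div, inv_mul_cancel₀ hq.ne', Real.rpow_one, one_mul, one_mul]
  -- value of F at rstar
  have hFr : radialF N p φ rstar = 0 := by
    unfold radialF
    rw [hcrit, Real.sign_zero]
    ring
  -- continuity of F on Ici 1
  have hFcont : ContinuousOn (radialF N p φ) (Ici 1) := by
    have heq : EqOn (radialF N p φ) (fun r : ℝ =>
        r ^ ((N : ℝ) - 1) * (Real.sign (deriv φ r) * |deriv φ r| ^ (p - 1)))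
        (Ici 1) := by
      intro r _; unfold radialF; ring
    refine ContinuousOn.congr ?_ heq
    refine ContinuousOn.mul ?_ ?_
    · exact fun r hr => ((Real.continuousAt_rpow_const r _
        (Or.inl (by have h0 : (0:ℝ) < r := lt_of_lt_of_le one_pos hr; exact h0.ne'))).continuousWithinAt)
    · exact (sign_mul_abs_rpow_continuous hq).comp_continuousOn hφC1
  -- continuity of the coefficient A(r) = r^(N-1) g r (φ r)^(p-1) on Ici 1
  have hAcont : ContinuousOn
      (fun r : ℝ => r ^ ((N : ℝ) - 1) * g r * φ r ^ (p - 1)) (Ici 1) := by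
    refine ContinuousOn.mul (ContinuousOn.mul ?_ hgcont) ?_
    · exact fun r hr => ((Real.continuousAt_rpow_const r _
        (Or.inl (by have h0 : (0:ℝ) < r := lt_of_lt_of_le one_pos hr; exact h0.ne'))).continuousWithinAt)
    · exact hφcont.rpow_const fun r hr => Or.inl (hφpos r hr).ne'
  have hBcont : ContinuousOn
      (fun r : ℝ => r ^ ((N : ℝ) - 1) * g r * φ r ^ p) (Ici 1) := by
    refine ContinuousOn.mul (ContinuousOn.mul ?_ hgcont) ?_
    · exact fun r hr => ((Real.continuousAt_rpow_const r _
        (Or.inl (by have h0 : (0:ℝ) < r := lt_of_lt_of_le one_pos hr; exact h0.ne'))).continuousWithinAt)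
    · exact hφcont.rpow_const fun r hr => Or.inl (hφpos r hr).ne'
  have hIccIci : Icc (1 : ℝ) rstar ⊆ Ici 1 := Icc_subset_Ici_self
  have hAint : IntervalIntegrable
      (fun r : ℝ => r ^ ((N : ℝ) - 1) * g r * φ r ^ (p - 1)) volume 1 rstar :=
    (hAcont.mono hIccIci).intervalIntegrable_of_Icc hle
  have hAint' : IntervalIntegrable
      (fun r : ℝ => -(lam * r ^ ((N : ℝ) - 1) * g r * φ r ^ (p - 1))) volume 1 rstar := by
    have := (hAint.const_mul lam).neg
    convert this using 1
    ext r
    simp [mul_assoc]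
  -- FTC
  have hFTC : ∫ r in (1:ℝ)..rstar, -(lam * r ^ ((N : ℝ) - 1) * g r * φ r ^ (p - 1))
      = radialF N p φ rstar - radialF N p φ 1 := by
    refine intervalIntegral.integral_eq_sub_of_hasDeriv_right_of_le hle
      (hFcont.mono hIccIci) (fun x hx => ((hODE x hx.1).hasDerivWithinAt)) hAint'
  have hkey : lam * ∫ r in (1:ℝ)..rstar, r ^ ((N : ℝ) - 1) * g r * φ r ^ (p - 1)
      = β * φ 1 ^ (p - 1) := by
    have h1 : ∫ r in (1:ℝ)..rstar, -(lam * r ^ ((N : ℝ) - 1) * g r * φ r ^ (p - 1))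
        = -(lam * ∫ r in (1:ℝ)..rstar, r ^ ((N : ℝ) - 1) * g r * φ r ^ (p - 1)) := by
      rw [← intervalIntegral.integral_const_mul, ← intervalIntegral.integral_neg]
      congr 1
      ext r
      ring
    rw [h1, hFr, hF1] at hFTC
    linarith
  -- F is strictly decreasing on [1, rstar]
  have hFanti : StrictAntiOn (radialF N p φ) (Icc 1 rstar) := by
    refine strictAntiOn_of_deriv_neg (convex_Icc _ _) (hFcont.mono hIccIci) ?_
    intro x hx
    rw [interior_Icc] at hx
    rw [(hODE x hx.1).deriv]
    have hx1 : (1:ℝ) ≤ x := hx.1.le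
    have : 0 < lam * x ^ ((N : ℝ) - 1) * g x * φ x ^ (p - 1) := by
      have := hrpow_pos x hx1
      have := hgpos x hx1
      have := Real.rpow_pos_of_pos (hφpos x hx1) (p - 1)
      positivity
    linarith
  -- deriv φ positive on [1, rstar)
  have hderivpos : ∀ r ∈ Ico (1:ℝ) rstar, 0 < deriv φ r := by
    intro r hr
    by_contra hcon
    push_neg at hcon
    have hFpos : 0 < radialF N p φ r := by
      have := hFanti ⟨hr.1, hr.2.le⟩ ⟨hle, le_rfl⟩ hr.2
      rw [hFr] at this
      exact this
    have hsign : Real.sign (deriv φ r) ≤ 0 := by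
      rcases hcon.lt_or_eq with h' | h'
      · rw [Real.sign_of_neg h']; norm_num
      · rw [h', Real.sign_zero]
    have habs : (0:ℝ) ≤ |deriv φ r| ^ (p - 1) := Real.rpow_nonneg (abs_nonneg _) _
    have hrp : (0:ℝ) ≤ r ^ ((N : ℝ) - 1) := (hrpow_pos r hr.1).le
    have : radialF N p φ r ≤ 0 := by
      unfold radialF
      exact mul_nonpos_of_nonpos_of_nonneg (mul_nonpos_of_nonneg_of_nonpos hrp hsign) habs
    linarith
  -- φ is monotone on [1, rstar]
  have hmono : MonotoneOn φ (Icc 1 rstar) := by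
    refine monotoneOn_of_deriv_nonneg (convex_Icc _ _) (hφcont.mono hIccIci) ?_ ?_
    · intro x hx
      rw [interior_Icc] at hx
      exact (hφdiff x hx.1.le).differentiableWithinAt
    · intro x hx
      rw [interior_Icc] at hx
      exact (hderivpos x ⟨hx.1.le, hx.2⟩).le
  -- compare the interval integrals
  have hBint : IntervalIntegrable
      (fun r : ℝ => r ^ ((N : ℝ) - 1) * g r * φ r ^ p) volume 1 rstar :=
    (hBcont.mono hIccIci).intervalIntegrable_of_Icc hle
  have hAφ1int : IntervalIntegrable
      (fun r : ℝ => r ^ ((N : ℝ) - 1) * g r * φ r ^ (p - 1) * φ 1) volume 1 rstar :=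
    hAint.mul_const _
  have hcomp : (∫ r in (1:ℝ)..rstar, r ^ ((N : ℝ) - 1) * g r * φ r ^ (p - 1) * φ 1)
      ≤ ∫ r in (1:ℝ)..rstar, r ^ ((N : ℝ) - 1) * g r * φ r ^ p := by
    refine intervalIntegral.integral_mono_on hle hAφ1int hBint ?_
    intro x hx
    have hx1 : (1:ℝ) ≤ x := hx.1
    have hphix : φ 1 ≤ φ x := hmono ⟨le_rfl, hle⟩ hx hx.1
    have hA0 : (0:ℝ) ≤ x ^ ((N : ℝ) - 1) * g x * φ x ^ (p - 1) := by
      have := hrpow_pos x hx1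
      have := hgpos x hx1
      have := Real.rpow_pos_of_pos (hφpos x hx1) (p - 1)
      positivity
    have hφp : φ x ^ p = φ x ^ (p - 1) * φ x := by
      rw [← Real.rpow_add_one (hφpos x hx1).ne']
      ring_nf
    rw [hφp]
    calc x ^ ((N : ℝ) - 1) * g x * φ x ^ (p - 1) * φ 1
        ≤ x ^ ((N : ℝ) - 1) * g x * φ x ^ (p - 1) * φ x :=
          mul_le_mul_of_nonneg_left hphix hA0
      _ = x ^ ((N : ℝ) - 1) * g x * (φ x ^ (p - 1) * φ x) := by ring
  -- split the integral over (1, ∞)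
  set B : ℝ → ℝ := fun r => r ^ ((N : ℝ) - 1) * g r * φ r ^ p with hB
  have hIntIoc : IntegrableOn B (Ioc 1 rstar) := hInt.mono_set Ioc_subset_Ioi_self
  have hIntIoi : IntegrableOn B (Ioi rstar) := hInt.mono_set (Ioi_subset_Ioi hle)
  have hsplit : (∫ r in Ioi (1:ℝ), B r)
      = (∫ r in Ioc (1:ℝ) rstar, B r) + ∫ r in Ioi rstar, B r := by
    rw [← setIntegral_union (Ioc_disjoint_Ioi le_rfl) measurableSet_Ioi hIntIoc hIntIoi,
      Ioc_union_Ioi_eq_Ioi hle]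
  -- the tail integral is positive
  have htail : 0 < ∫ r in Ioi rstar, B r := by
    have hsub : Icc rstar (rstar + 1) ⊆ Ici (1:ℝ) :=
      fun x hx => le_trans hle hx.1
    have hint2 : IntervalIntegrable B volume rstar (rstar + 1) :=
      ((hBcont.mono hsub).intervalIntegrable_of_Icc (by linarith))
    have hpos2 : 0 < ∫ r in rstar..(rstar + 1), B r := by
      refine intervalIntegral.intervalIntegral_pos_of_pos_on hint2 ?_ (by linarith)
      intro x hx
      have hx1 : (1:ℝ) ≤ x := le_trans hle hx.1.le
      have := hrpow_pos x hx1
      have := hgpos x hx1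
      have := Real.rpow_pos_of_pos (hφpos x hx1) p
      positivity
    have heq2 : (∫ r in rstar..(rstar + 1), B r) = ∫ r in Ioc rstar (rstar+1), B r :=
      intervalIntegral.integral_of_le (by linarith)
    have hmono2 : (∫ r in Ioc rstar (rstar+1), B r) ≤ ∫ r in Ioi rstar, B r := by
      refine setIntegral_mono_set hIntIoi ?_ (HasSubset.Subset.eventuallyLE Ioc_subset_Ioi_self)
      filter_upwards [ae_restrict_mem measurableSet_Ioi] with x hx
      have hx1 : (1:ℝ) ≤ x := le_trans hle (le_of_lt hx)
      have := hrpow_pos x hx1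
      have := hgpos x hx1
      have := Real.rpow_pos_of_pos (hφpos x hx1) p
      positivity
    linarith
  -- put everything together
  have hIocI : (∫ r in (1:ℝ)..rstar, B r) = ∫ r in Ioc (1:ℝ) rstar, B r :=
    intervalIntegral.integral_of_le hle
  have hconst : (∫ r in (1:ℝ)..rstar, r ^ ((N : ℝ) - 1) * g r * φ r ^ (p - 1) * φ 1)
      = (∫ r in (1:ℝ)..rstar, r ^ ((N : ℝ) - 1) * g r * φ r ^ (p - 1)) * φ 1 :=
    intervalIntegral.integral_mul_const _ _
  have hφ1p : φ 1 ^ p = φ 1 ^ (p - 1) * φ 1 := by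
    rw [← Real.rpow_add_one (hφpos 1 le_rfl).ne']
    ring_nf
  set IA := ∫ r in (1:ℝ)..rstar, r ^ ((N : ℝ) - 1) * g r * φ r ^ (p - 1) with hIA
  set I := ∫ r in Ioc (1:ℝ) rstar, B r with hI
  set T := ∫ r in Ioi rstar, B r with hT
  set J := ∫ r in Ioi (1:ℝ), B r with hJ
  have hcomp' : IA * φ 1 ≤ I := by
    rw [← hIocI]
    calc IA * φ 1 = ∫ r in (1:ℝ)..rstar, r ^ ((N : ℝ) - 1) * g r * φ r ^ (p - 1) * φ 1 :=
      hconst.symm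
      _ ≤ _ := hcomp
  have hφ1 : 0 < φ 1 := hφpos 1 le_rfl
  have hωlam : 0 < ω * lam := mul_pos hω hlam
  -- goal
  rw [hφ1p]
  have h1 : β * ω * (φ 1 ^ (p - 1) * φ 1) = ω * (lam * IA) * φ 1 := by
    rw [hkey]; ring
  rw [h1]
  have h2 : ω * (lam * IA) * φ 1 = ω * lam * (IA * φ 1) := by ring
  rw [h2]
  have h3 : ω * lam * (IA * φ 1) ≤ ω * lam * I :=
    mul_le_mul_of_nonneg_left hcomp' hωlam.le
  have h4 : ω * J = 1 := hNorm
  nlinarith [mul_pos hωlam htail]
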